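/- For n ≥ 2, p ∈ (1/n, 1), and r ∈ (0, ∞), the second derivative of p ↦ (p^r + (n-1)^(1-r)(1-p)^r)^(1/r) equals (r-1)·(n-1)^(1-r)·(p(1-p))^(r-2)·(p^r + (n-1)^(1-r)(1-p)^r)^((1/r)-2). Consequently this function is strictly concave on [1/n,1] when 0 < r < 1 and strictly convex when r > 1. -/

import Mathlib

open Real Set

private lemma aux_g_pos {c r p : ℝ} (hc : 0 < c) (hr : 0 < r) (hp0 : 0 < p) (hp1 : p ≤ 1) :
    0 < p ^ r + c * (1 - p) ^ r := by
  have h1 : (0:ℝ) < p ^ r := rpow_pos_of_pos hp0 r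
  have h2 : (0:ℝ) ≤ (1 - p) ^ r := rpow_nonneg (by linarith) r
  nlinarith

private lemma aux_d1 {c r p : ℝ} (hc : 0 < c) (hr : 0 < r) (hp : p ∈ Set.Ioo (0:ℝ) 1) :
    HasDerivAt (fun p : ℝ => (p ^ r + c * (1 - p) ^ r) ^ (1 / r))
      ((p ^ r + c * (1 - p) ^ r) ^ (1 / r - 1) * (p ^ (r - 1) - c * (1 - p) ^ (r - 1))) p := by
  obtain ⟨hp0, hp1⟩ := hp
  have hq : 0 < 1 - p := by linarith
  have h1 : HasDerivAt (fun p : ℝ => p ^ r) (r * p ^ (r - 1)) p :=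
    Real.hasDerivAt_rpow_const (Or.inl hp0.ne')
  have h2 : HasDerivAt (fun p : ℝ => 1 - p) (-1) p := by
    simpa using (hasDerivAt_id p).const_sub 1
  have h3 : HasDerivAt (fun p : ℝ => (1 - p) ^ r) (-1 * r * (1 - p) ^ (r - 1)) p :=
    h2.rpow_const (Or.inl hq.ne')
  have hg : HasDerivAt (fun p : ℝ => p ^ r + c * (1 - p) ^ r) _ p := h1.add (h3.const_mul c)
  have hgpos := aux_g_pos hc hr hp0 hp1.le
  have h4 := hg.rpow_const (p := 1 / r) (Or.inl hgpos.ne')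
  convert h4 using 1
  field_simp
  ring

private lemma aux_d2 {c r p : ℝ} (hc : 0 < c) (hr : 0 < r) (hp : p ∈ Set.Ioo (0:ℝ) 1) :
    HasDerivAt (fun p : ℝ =>
        (p ^ r + c * (1 - p) ^ r) ^ (1 / r - 1) * (p ^ (r - 1) - c * (1 - p) ^ (r - 1)))
      ((r - 1) * c * (p * (1 - p)) ^ (r - 2)
        * (p ^ r + c * (1 - p) ^ r) ^ (1 / r - 2)) p := by
  obtain ⟨hp0, hp1⟩ := hp
  have hq : 0 < 1 - p := by linarith
  have h1 : HasDerivAt (fun p : ℝ => p ^ r) (r * p ^ (r - 1)) p :=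
    Real.hasDerivAt_rpow_const (Or.inl hp0.ne')
  have h2 : HasDerivAt (fun p : ℝ => 1 - p) (-1) p := by
    simpa using (hasDerivAt_id p).const_sub 1
  have h3 : HasDerivAt (fun p : ℝ => (1 - p) ^ r) (-1 * r * (1 - p) ^ (r - 1)) p :=
    h2.rpow_const (Or.inl hq.ne')
  have hg : HasDerivAt (fun p : ℝ => p ^ r + c * (1 - p) ^ r) _ p := h1.add (h3.const_mul c)
  have hgpos := aux_g_pos hc hr hp0 hp1.le
  -- derivative of the first factor
  have h4 := hg.rpow_const (p := 1 / r - 1) (Or.inl hgpos.ne')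
  -- derivative of the second factor
  have h5 : HasDerivAt (fun p : ℝ => p ^ (r - 1)) ((r - 1) * p ^ (r - 1 - 1)) p :=
    Real.hasDerivAt_rpow_const (Or.inl hp0.ne')
  have h6 : HasDerivAt (fun p : ℝ => (1 - p) ^ (r - 1)) (-1 * (r - 1) * (1 - p) ^ (r - 1 - 1)) p :=
    h2.rpow_const (Or.inl hq.ne')
  have h7 : HasDerivAt (fun p : ℝ => p ^ (r - 1) - c * (1 - p) ^ (r - 1)) _ p := h5.sub (h6.const_mul c)
  have h8 : HasDerivAt (fun p : ℝ =>
      (p ^ r + c * (1 - p) ^ r) ^ (1 / r - 1) * (p ^ (r - 1) - c * (1 - p) ^ (r - 1))) _ p := h4.mul h7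
  convert h8 using 1
  -- algebra
  set a := p ^ (r - 2) with ha
  set b := (1 - p) ^ (r - 2) with hb
  have hpa : p ^ r = a * p ^ 2 := by
    rw [ha, ← Real.rpow_natCast p 2, ← Real.rpow_add hp0, show r - 2 + (2:ℕ) = r by push_cast; ring]
  have hpa1 : p ^ (r - 1) = a * p := by
    rw [ha, ← Real.rpow_add_one hp0.ne' (r - 2), show r - 2 + 1 = r - 1 by ring]
  have hpa2 : p ^ (r - 1 - 1) = a := by rw [ha, show r - 1 - 1 = r - 2 by ring]
  have hpb : (1 - p) ^ r = b * (1 - p) ^ 2 := by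
    rw [hb, ← Real.rpow_natCast (1 - p) 2, ← Real.rpow_add hq, show r - 2 + (2:ℕ) = r by push_cast; ring]
  have hpb1 : (1 - p) ^ (r - 1) = b * (1 - p) := by
    rw [hb, ← Real.rpow_add_one hq.ne' (r - 2), show r - 2 + 1 = r - 1 by ring]
  have hpb2 : (1 - p) ^ (r - 1 - 1) = b := by rw [hb, show r - 1 - 1 = r - 2 by ring]
  have hab : (p * (1 - p)) ^ (r - 2) = a * b := Real.mul_rpow hp0.le hq.le
  set g := p ^ r + c * (1 - p) ^ r with hgdef
  have hg1 : g ^ (1 / r - 1) = g ^ (1 / r - 2) * g := by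
    rw [← Real.rpow_add_one hgpos.ne' (1 / r - 2), show 1 / r - 2 + 1 = 1 / r - 1 by ring]
  have hg2 : g ^ (1 / r - 1 - 1) = g ^ (1 / r - 2) := by
    rw [show 1 / r - 1 - 1 = 1 / r - 2 by ring]
  rw [hab, hg1, hg2, hpa1, hpb1, hpa2, hpb2]
  have hgval : g = a * p ^ 2 + c * (b * (1 - p) ^ 2) := by rw [hgdef, hpa, hpb]
  rw [hgval]
  have hr' : r ≠ 0 := hr.ne'
  field_simp
  ring

private lemma aux_d2' {c r p : ℝ} (hc : 0 < c) (hr : 0 < r) (hp : p ∈ Set.Ioo (0:ℝ) 1) :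
    deriv (deriv (fun p : ℝ => (p ^ r + c * (1 - p) ^ r) ^ (1 / r))) p
      = (r - 1) * c * (p * (1 - p)) ^ (r - 2)
        * (p ^ r + c * (1 - p) ^ r) ^ (1 / r - 2) := by
  have hev : deriv (fun p : ℝ => (p ^ r + c * (1 - p) ^ r) ^ (1 / r)) =ᶠ[nhds p]
      (fun q : ℝ => (q ^ r + c * (1 - q) ^ r) ^ (1 / r - 1)
        * (q ^ (r - 1) - c * (1 - q) ^ (r - 1))) := by
    filter_upwards [isOpen_Ioo.mem_nhds hp] with q hq using (aux_d1 hc hr hq).deriv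
  rw [hev.deriv_eq, (aux_d2 hc hr hp).deriv]

private lemma aux_cont {c r : ℝ} (hc : 0 < c) (hr : 0 < r) {s : Set ℝ}
    (hs : ∀ x ∈ s, 0 < x ∧ x ≤ 1) :
    ContinuousOn (fun p : ℝ => (p ^ r + c * (1 - p) ^ r) ^ (1 / r)) s := by
  intro x hx
  obtain ⟨hx0, hx1⟩ := hs x hx
  have hgpos := aux_g_pos hc hr hx0 hx1
  have h1 : ContinuousAt (fun p : ℝ => p ^ r + c * (1 - p) ^ r) x := by
    have ha : ContinuousAt (fun p : ℝ => p ^ r) x :=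
      Real.continuousAt_rpow_const x r (Or.inr hr.le)
    have hb : ContinuousAt (fun p : ℝ => (1 - p) ^ r) x :=
      (Real.continuousAt_rpow_const (1 - x) r (Or.inr hr.le)).comp
        (by fun_prop)
    exact ha.add (hb.const_mul c)
  exact (h1.rpow_const (Or.inl hgpos.ne')).continuousWithinAt

theorem stmt_4 (n : ℕ) (hn : 2 ≤ n) (r : ℝ) (hr : 0 < r) :
    (∀ p ∈ Set.Ioo (1 / (n : ℝ)) 1,
      deriv (deriv (fun p : ℝ =>
          (p ^ r + ((n : ℝ) - 1) ^ (1 - r) * (1 - p) ^ r) ^ (1 / r))) p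
        = (r - 1) * ((n : ℝ) - 1) ^ (1 - r) * (p * (1 - p)) ^ (r - 2)
            * (p ^ r + ((n : ℝ) - 1) ^ (1 - r) * (1 - p) ^ r) ^ (1 / r - 2)) ∧
    (r < 1 → StrictConcaveOn ℝ (Set.Icc (1 / (n : ℝ)) 1)
        (fun p : ℝ => (p ^ r + ((n : ℝ) - 1) ^ (1 - r) * (1 - p) ^ r) ^ (1 / r))) ∧
    (1 < r → StrictConvexOn ℝ (Set.Icc (1 / (n : ℝ)) 1)
        (fun p : ℝ => (p ^ r + ((n : ℝ) - 1) ^ (1 - r) * (1 - p) ^ r) ^ (1 / r))) := by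
  have hn2 : (2:ℝ) ≤ (n:ℝ) := by exact_mod_cast hn
  have hc : 0 < ((n : ℝ) - 1) ^ (1 - r) := Real.rpow_pos_of_pos (by linarith) _
  have h0n : 0 < 1 / (n:ℝ) := by positivity
  have h1n : 1 / (n:ℝ) < 1 := by
    rw [div_lt_one (by linarith)]; linarith
  have hsub : Set.Ioo (1 / (n:ℝ)) 1 ⊆ Set.Ioo (0:ℝ) 1 :=
    Set.Ioo_subset_Ioo h0n.le le_rfl
  have key : ∀ p ∈ Set.Ioo (1 / (n : ℝ)) 1,
      deriv (deriv (fun p : ℝ =>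
          (p ^ r + ((n : ℝ) - 1) ^ (1 - r) * (1 - p) ^ r) ^ (1 / r))) p
        = (r - 1) * ((n : ℝ) - 1) ^ (1 - r) * (p * (1 - p)) ^ (r - 2)
            * (p ^ r + ((n : ℝ) - 1) ^ (1 - r) * (1 - p) ^ r) ^ (1 / r - 2) :=
    fun p hp => aux_d2' hc hr (hsub hp)
  have hcont := aux_cont hc hr (s := Set.Icc (1 / (n:ℝ)) 1)
    (fun x hx => ⟨lt_of_lt_of_le h0n hx.1, hx.2⟩)
  have hsign : ∀ p ∈ Set.Ioo (1 / (n:ℝ)) 1,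
      deriv^[2] (fun p : ℝ =>
          (p ^ r + ((n : ℝ) - 1) ^ (1 - r) * (1 - p) ^ r) ^ (1 / r)) p
        = (r - 1) * ((n : ℝ) - 1) ^ (1 - r) * (p * (1 - p)) ^ (r - 2)
            * (p ^ r + ((n : ℝ) - 1) ^ (1 - r) * (1 - p) ^ r) ^ (1 / r - 2) :=
    fun p hp => key p hp
  refine ⟨key, fun hr1 => ?_, fun hr1 => ?_⟩
  · refine strictConcaveOn_of_deriv2_neg (convex_Icc _ _) hcont (fun p hp => ?_)
    rw [interior_Icc] at hp
    rw [hsign p hp]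
    obtain ⟨hp0, hp1⟩ := hp
    have hq0 : 0 < p := lt_trans h0n hp0
    have hq1 : 0 < 1 - p := by linarith
    have h1 : 0 < (p * (1 - p)) ^ (r - 2) := Real.rpow_pos_of_pos (by positivity) _
    have h2 : 0 < (p ^ r + ((n : ℝ) - 1) ^ (1 - r) * (1 - p) ^ r) ^ (1 / r - 2) :=
      Real.rpow_pos_of_pos (aux_g_pos hc hr hq0 hp1.le) _
    have : 0 < ((n : ℝ) - 1) ^ (1 - r) * (p * (1 - p)) ^ (r - 2)
        * (p ^ r + ((n : ℝ) - 1) ^ (1 - r) * (1 - p) ^ r) ^ (1 / r - 2) := by positivity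
    nlinarith
  · refine strictConvexOn_of_deriv2_pos (convex_Icc _ _) hcont (fun p hp => ?_)
    rw [interior_Icc] at hp
    rw [hsign p hp]
    obtain ⟨hp0, hp1⟩ := hp
    have hq0 : 0 < p := lt_trans h0n hp0
    have hq1 : 0 < 1 - p := by linarith
    have h1 : 0 < (p * (1 - p)) ^ (r - 2) := Real.rpow_pos_of_pos (by positivity) _
    have h2 : 0 < (p ^ r + ((n : ℝ) - 1) ^ (1 - r) * (1 - p) ^ r) ^ (1 / r - 2) :=
      Real.rpow_pos_of_pos (aux_g_pos hc hr hq0 hp1.le) _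
    have : 0 < ((n : ℝ) - 1) ^ (1 - r) * (p * (1 - p)) ^ (r - 2)
        * (p ^ r + ((n : ℝ) - 1) ^ (1 - r) * (1 - p) ^ r) ^ (1 / r - 2) := by positivity
    nlinarith
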